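/- Let T be a subtournament of a 3-dicritical digraph D and let S be a transitive subtournament of T with acyclic ordering v1, …, vs. For any vertex x of T not in S, there is an increasing sequence of intervals (I1, I2, I3, I4) of S whose union is S such that, in T, x dominates I1 ∪ I3 and is dominated by I2 ∪ I4. -/

import Mathlib

/-- A (loopless, simple) digraph on vertex type `V`. -/
structure SimpleDigraph (V : Type) where
  Adj : V → V → Prop
  loopless : ∀ v, ¬ Adj v v

namespace SimpleDigraph

/-- A set of arcs (given as a relation) is acyclic if it admits no directed closed walk. -/
def AcyclicRel {V : Type} (A : V → V → Prop) : Prop :=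
  ∀ v, ¬ Relation.TransGen A v v

/-- A set of arcs is 2-dicolourable if the vertices can be coloured with two colours
so that each colour class induces an acyclic subdigraph. -/
def Dicolourable2Rel {V : Type} (A : V → V → Prop) : Prop :=
  ∃ φ : V → Fin 2, ∀ i : Fin 2,
    AcyclicRel (fun a b => A a b ∧ φ a = i ∧ φ b = i)

/-- A digraph is 2-dicolourable if its vertices can be coloured with two colours
so that each colour class induces an acyclic subdigraph. -/
def Dicolourable2 {V : Type} (D : SimpleDigraph V) : Prop :=
  Dicolourable2Rel D.Adj

/-- `(S, A)` describes a subdigraph of `D`: its vertex set is `S` and its arcs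
are given by `A`, which must join vertices of `S` and be arcs of `D`. -/
def IsSubdigraphOn {V : Type} (D : SimpleDigraph V) (S : Set V) (A : V → V → Prop) : Prop :=
  ∀ u v, A u v → u ∈ S ∧ v ∈ S ∧ D.Adj u v

/-- `D` is 3-dicritical: `D` is not 2-dicolourable, but every proper subdigraph of `D`
(one missing a vertex or an arc) is 2-dicolourable. -/
def Dicritical3 {V : Type} (D : SimpleDigraph V) : Prop :=
  ¬ D.Dicolourable2 ∧
    ∀ (S : Set V) (A : V → V → Prop), D.IsSubdigraphOn S A →
      (S ≠ Set.univ ∨ A ≠ D.Adj) → Dicolourable2Rel A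

/-- A digraph is semi-complete if any two distinct vertices are joined by at least one arc. -/
def SemiComplete {V : Type} (D : SimpleDigraph V) : Prop :=
  ∀ u v : V, u ≠ v → D.Adj u v ∨ D.Adj v u

/-- A tournament is a semi-complete digraph with no digon. -/
def IsTournament {V : Type} (D : SimpleDigraph V) : Prop :=
  D.SemiComplete ∧ ∀ u v : V, ¬ (D.Adj u v ∧ D.Adj v u)

/-- Isomorphism of digraphs. -/
def Iso {V W : Type} (D : SimpleDigraph V) (E : SimpleDigraph W) : Prop :=
  ∃ e : V ≃ W, ∀ u v : V, D.Adj u v ↔ E.Adj (e u) (e v)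

/-- `D` contains (a copy of) `H` as a subdigraph. -/
def ContainsSub {V W : Type} (D : SimpleDigraph V) (H : SimpleDigraph W) : Prop :=
  ∃ f : W → V, Function.Injective f ∧ ∀ a b, H.Adj a b → D.Adj (f a) (f b)

/-- `D` contains (a copy of) `H` as an induced subdigraph. -/
def ContainsInduced {V W : Type} (D : SimpleDigraph V) (H : SimpleDigraph W) : Prop :=
  ∃ f : W → V, Function.Injective f ∧ ∀ a b, H.Adj a b ↔ D.Adj (f a) (f b)

end SimpleDigraph


private lemma transGen_split {V : Type} (R : V → V → Prop) (u w : V) {a b : V}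
    (h : Relation.TransGen (fun x y => R x y ∨ (x = u ∧ y = w)) a b) :
    Relation.TransGen R a b ∨
      (Relation.ReflTransGen R a u ∧ Relation.ReflTransGen R w b) := by
  induction h using Relation.TransGen.head_induction_on with
  | single hab =>
    rcases hab with hR | ⟨rfl, rfl⟩
    · exact Or.inl (Relation.TransGen.single hR)
    · exact Or.inr ⟨Relation.ReflTransGen.refl, Relation.ReflTransGen.refl⟩
  | head hac hcb IH =>
    rcases hac with hR | ⟨rfl, rfl⟩
    · rcases IH with h1 | ⟨h1, h2⟩
      · exact Or.inl (Relation.TransGen.head hR h1)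
      · exact Or.inr ⟨Relation.ReflTransGen.head hR h1, h2⟩
    · rcases IH with h1 | ⟨h1, h2⟩
      · exact Or.inr ⟨Relation.ReflTransGen.refl, h1.to_reflTransGen⟩
      · exact Or.inr ⟨Relation.ReflTransGen.refl, h2⟩

private lemma transGen_first {V : Type} {R : V → V → Prop} {a b : V}
    (h : Relation.TransGen R a b) : ∃ y, R a y := by
  induction h with
  | single h => exact ⟨_, h⟩
  | tail _ _ ih => exact ih

private lemma transGen_last {V : Type} {R : V → V → Prop} {a b : V}
    (h : Relation.TransGen R a b) : ∃ y, R y b := by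
  induction h with
  | single h => exact ⟨_, h⟩
  | tail _ h _ => exact ⟨_, h⟩

private lemma fin2_eq {a d e : Fin 2} (h1 : d ≠ a) (h2 : e ≠ a) : d = e := by
  revert a d e; decide

/-- Let `T` (vertex set `TS`, arcs `TA`) be a subtournament of a
3-dicritical digraph `D`, and let `S` be a transitive subtournament of `T` with acyclic
ordering `v 0, …, v (s-1)`. For any vertex `x` of `T` not in `S`, there is an increasing
sequence of four intervals of `S` (given by cut points `a ≤ b ≤ c ≤ s`) covering `S`,
such that in `T` the vertex `x` dominates the first and third intervals and is dominated
by the second and fourth. -/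
theorem intervals_of_transitive_subtournament
    {V : Type} [Fintype V] (D : SimpleDigraph V) (hD : D.Dicritical3)
    (TS : Set V) (TA : V → V → Prop) (hsub : D.IsSubdigraphOn TS TA)
    (htour : ∀ u v, u ∈ TS → v ∈ TS → u ≠ v → (TA u v ↔ ¬ TA v u))
    (s : ℕ) (v : Fin s → V) (hinj : Function.Injective v)
    (hmem : ∀ i, v i ∈ TS)
    (hacyclic : ∀ i j : Fin s, i < j → TA (v i) (v j))
    (x : V) (hx : x ∈ TS) (hxS : ∀ i, x ≠ v i) :
    ∃ a b c : ℕ, a ≤ b ∧ b ≤ c ∧ c ≤ s ∧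
      ∀ i : Fin s,
        (i.val < a → TA x (v i)) ∧
        (a ≤ i.val → i.val < b → TA (v i) x) ∧
        (b ≤ i.val → i.val < c → TA x (v i)) ∧
        (c ≤ i.val → TA (v i) x) := by
  classical
  have dichot : ∀ i : Fin s, TA (v i) x ↔ ¬ TA x (v i) := fun i =>
    htour (v i) x (hmem i) hx (fun h => hxS i h.symm)
  -- Key claim: there is no pattern (dominated, out, dominated, out)
  have key : ∀ i j k l : Fin s, i < j → j < k → k < l →
      TA (v i) x → TA x (v j) → TA (v k) x → TA x (v l) → False := by
    intro i j k l hij hjk hkl hDi hOj hDk hOl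
    have hil : i < l := hij.trans (hjk.trans hkl)
    set u := v i with hu
    set w := v l with hw
    have huw : D.Adj u w := (hsub _ _ (hacyclic i l hil)).2.2
    set A' : V → V → Prop := fun p q => D.Adj p q ∧ ¬ (p = u ∧ q = w) with hA'
    have hsub' : D.IsSubdigraphOn Set.univ A' := fun p q hpq =>
      ⟨trivial, trivial, hpq.1⟩
    have hne : A' ≠ D.Adj := by
      intro h
      have h2 : A' u w := h ▸ huw
      exact h2.2 ⟨rfl, rfl⟩
    obtain ⟨φ, hφ⟩ := hD.2 Set.univ A' hsub' (Or.inr hne)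
    have hnc : ∃ c : Fin 2, ∃ z, Relation.TransGen
        (fun p q => D.Adj p q ∧ φ p = c ∧ φ q = c) z z := by
      by_contra hcon
      push_neg at hcon
      exact hD.1 ⟨φ, fun c z h => hcon c z h⟩
    obtain ⟨c, z, hz⟩ := hnc
    set R : V → V → Prop := fun p q => A' p q ∧ φ p = c ∧ φ q = c with hRdef
    have hRacyc : SimpleDigraph.AcyclicRel R := hφ c
    have hz' : Relation.TransGen (fun p q => R p q ∨ (p = u ∧ q = w)) z z := by
      refine Relation.TransGen.mono ?_ z z hz
      rintro p q ⟨hpq, h1, h2⟩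
      by_cases h : p = u ∧ q = w
      · exact Or.inr h
      · exact Or.inl ⟨⟨hpq, h⟩, h1, h2⟩
    rcases transGen_split R u w hz' with h1 | ⟨h1, h2⟩
    · exact hRacyc z h1
    have hwu : Relation.ReflTransGen R w u := h2.trans h1
    have hwune : w ≠ u := fun h => (Fin.ne_of_lt hil) ((hinj h).symm)
    have hwuT : Relation.TransGen R w u := by
      rcases Relation.reflTransGen_iff_eq_or_transGen.mp hwu with h | h
      · exact absurd h.symm hwune
      · exact h
    obtain ⟨y1, hy1⟩ := transGen_first hwuT
    have hφw : φ w = c := hy1.2.1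
    obtain ⟨y2, hy2⟩ := transGen_last hwuT
    have hφu : φ u = c := hy2.2.2
    by_cases hφx : φ x = c
    · -- cycle u → x → w →* u in colour c
      have r1 : R u x := ⟨⟨(hsub _ _ hDi).2.2, fun h => hxS l h.2⟩, hφu, hφx⟩
      have r2 : R x w := ⟨⟨(hsub _ _ hOl).2.2, fun h => hxS i h.1⟩, hφx, hφw⟩
      exact hRacyc u
        ((Relation.TransGen.head r1 (Relation.TransGen.single r2)).trans_left hwu)
    · have cyc : ∀ m : Fin s, i < m → m < l → φ (v m) = c → False := by
        intro m him hml hφm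
        have r1 : R u (v m) :=
          ⟨⟨(hsub _ _ (hacyclic i m him)).2.2,
            fun h => (Fin.ne_of_lt hml) (hinj h.2)⟩, hφu, hφm⟩
        have r2 : R (v m) w :=
          ⟨⟨(hsub _ _ (hacyclic m l hml)).2.2,
            fun h => (Fin.ne_of_lt him) ((hinj h.1).symm)⟩, hφm, hφw⟩
        exact hRacyc u
          ((Relation.TransGen.head r1 (Relation.TransGen.single r2)).trans_left hwu)
      have hmid : φ (v j) = c ∨ φ (v k) = c := by
        by_contra hcon
        push_neg at hcon
        have hj : φ (v j) = φ x := fin2_eq hcon.1 hφx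
        have hk : φ (v k) = φ x := fin2_eq hcon.2 hφx
        have t1 : A' x (v j) ∧ φ x = φ x ∧ φ (v j) = φ x :=
          ⟨⟨(hsub _ _ hOj).2.2, fun h => hxS i h.1⟩, rfl, hj⟩
        have t2 : A' (v j) (v k) ∧ φ (v j) = φ x ∧ φ (v k) = φ x :=
          ⟨⟨(hsub _ _ (hacyclic j k hjk)).2.2,
            fun h => (Fin.ne_of_lt hij) ((hinj h.1).symm)⟩, hj, hk⟩
        have t3 : A' (v k) x ∧ φ (v k) = φ x ∧ φ x = φ x :=
          ⟨⟨(hsub _ _ hDk).2.2,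
            fun h => (Fin.ne_of_lt (hij.trans hjk)) ((hinj h.1).symm)⟩, hk, rfl⟩
        exact hφ (φ x) x
          (Relation.TransGen.head t1 (Relation.TransGen.head t2 (Relation.TransGen.single t3)))
      rcases hmid with hm | hm
      · exact cyc j hij (hjk.trans hkl) hm
      · exact cyc k (hij.trans hjk) hkl hm
  -- Now extract the cut points via least indices
  have exPa : ∃ n, n = s ∨ ∃ h : n < s, TA (v ⟨n, h⟩) x := ⟨s, Or.inl rfl⟩
  set a := Nat.find exPa with hadef
  have hPa := Nat.find_spec exPa
  have exPb : ∃ n, n = s ∨ (a ≤ n ∧ ∃ h : n < s, TA x (v ⟨n, h⟩)) := ⟨s, Or.inl rfl⟩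
  set b := Nat.find exPb with hbdef
  have hPb := Nat.find_spec exPb
  have exPc : ∃ n, n = s ∨ (b ≤ n ∧ ∃ h : n < s, TA (v ⟨n, h⟩) x) := ⟨s, Or.inl rfl⟩
  set c := Nat.find exPc with hcdef
  have hPc := Nat.find_spec exPc
  have hcs : c ≤ s := Nat.find_le (Or.inl rfl)
  have hab : a ≤ b := by
    rcases hPb with h | h
    · have : a ≤ s := Nat.find_le (Or.inl rfl)
      omega
    · exact h.1
  have hbc : b ≤ c := by
    rcases hPc with h | h
    · have : b ≤ s := Nat.find_le (Or.inl rfl)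
      omega
    · exact h.1
  refine ⟨a, b, c, hab, hbc, hcs, ?_⟩
  intro i
  refine ⟨?_, ?_, ?_, ?_⟩
  · intro hia
    have hmin := Nat.find_min exPa hia
    push_neg at hmin
    have h2 : ¬ TA (v i) x := hmin.2 i.isLt
    by_contra hno
    exact h2 ((dichot i).mpr hno)
  · intro hai hib
    have hmin := Nat.find_min exPb hib
    push_neg at hmin
    have h2 : ¬ TA x (v i) := hmin.2 hai i.isLt
    exact (dichot i).mpr h2
  · intro hbi hic
    have hmin := Nat.find_min exPc hic
    push_neg at hmin
    have h2 : ¬ TA (v i) x := hmin.2 hbi i.isLt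
    by_contra hno
    exact h2 ((dichot i).mpr hno)
  · intro hci
    by_contra hno
    have hOi : TA x (v i) := by
      by_contra h2
      exact hno ((dichot i).mpr h2)
    rcases hPc with h | h
    · have := i.isLt; omega
    obtain ⟨hbc2, hc', hDc⟩ := h
    rcases hPb with h | h
    · have := i.isLt; omega
    obtain ⟨hab2, hb', hOb⟩ := h
    rcases hPa with h | h
    · have := i.isLt; omega
    obtain ⟨ha', hDa⟩ := h
    have hlt1 : a < b := by
      rcases Nat.lt_or_ge a b with h | h
      · exact h
      · exfalso
        have heq : (⟨a, ha'⟩ : Fin s) = ⟨b, hb'⟩ := by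
          apply Fin.ext; simp; omega
        exact ((dichot ⟨b, hb'⟩).mp (heq ▸ hDa)) hOb
    have hlt2 : b < c := by
      rcases Nat.lt_or_ge b c with h | h
      · exact h
      · exfalso
        have heq : (⟨b, hb'⟩ : Fin s) = ⟨c, hc'⟩ := by
          apply Fin.ext; simp; omega
        exact ((dichot ⟨c, hc'⟩).mp hDc) (heq ▸ hOb)
    have hlt3 : c < i.val := by
      rcases Nat.lt_or_ge c i.val with h | h
      · exact h
      · exfalso
        have heq : (⟨c, hc'⟩ : Fin s) = i := by
          apply Fin.ext; simp; omega
        exact ((dichot i).mp (heq ▸ hDc)) hOi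
    exact key ⟨a, ha'⟩ ⟨b, hb'⟩ ⟨c, hc'⟩ i
      (Fin.mk_lt_mk.mpr hlt1) (Fin.mk_lt_mk.mpr hlt2) (Fin.lt_def.mpr hlt3)
      hDa hOb hDc hOi
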